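/- Let n > 1 be an integer such that p = 4n−1 is prime, let M = ⌊n²/p⌋, and for integers m ≥ 0 set Q_m = 1/2 + (1/2)·√(4mp + 3p − 4) and R_m = √(mp). Then (1/2)·∑_{k=1}^{p−1} r_p(k²) = −p·∑_{m=0}^{M−1} (2m+1)·(⌊R_{m+1}⌋ − ⌊Q_m⌋) − 2p·∑_{m=0}^{M−1} m·(⌊Q_m⌋ − ⌊R_m⌋) + (4n³ + 3n² − n)/6 − M·p·(2n − 1 − 2⌊Q_{M−1}⌋), where for M = 0 the sums are empty and the final term vanishes. -/

import Mathlib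

open Finset

private lemma Icc_insert_top (K : ℤ) (hK : 0 ≤ K) :
    Icc (0:ℤ) K = insert K (Icc 0 (K-1)) := by
  ext x; simp only [mem_Icc, mem_insert]; omega

private lemma sum_tele (g : ℤ → ℤ) : ∀ K : ℤ, 0 ≤ K →
    ∑ m ∈ Icc (0:ℤ) (K-1), (g (m+1) - g m) = g K - g 0 := by
  refine Int.le_induction ?_ ?_
  · simp
  · intro K hK ih
    rw [show K + 1 - 1 = K by ring, Icc_insert_top K hK, Finset.sum_insert (by simp)]
    omega

private lemma sum_shift (f : ℤ → ℤ) (K : ℤ) :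
    ∑ m ∈ Icc (0:ℤ) (K-1), f (m+1) = ∑ m ∈ Icc (1:ℤ) K, f m := by
  refine Finset.sum_nbij' (fun m => m + 1) (fun m => m - 1) ?_ ?_ ?_ ?_ ?_ <;>
    intro a ha <;> simp only [mem_Icc] at * <;> first | rfl | omega

private lemma sum_id : ∀ K : ℤ, 0 ≤ K →
    2 * ∑ m ∈ Icc (0:ℤ) (K-1), m = K * (K-1) := by
  refine Int.le_induction ?_ ?_
  · simp
  · intro K hK ih
    rw [show K + 1 - 1 = K by ring, Icc_insert_top K hK, Finset.sum_insert (by simp)]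
    ring_nf; ring_nf at ih; omega

private lemma sum_const_Icc (c : ℤ) : ∀ K : ℤ, 0 ≤ K →
    ∑ _m ∈ Icc (0:ℤ) (K-1), c = K * c := by
  refine Int.le_induction ?_ ?_
  · simp
  · intro K hK ih
    rw [show K + 1 - 1 = K by ring, Icc_insert_top K hK, Finset.sum_insert (by simp)]
    rw [ih]; ring

private lemma sum_sq : ∀ K : ℤ, 0 ≤ K →
    6 * ∑ k ∈ Icc (1:ℤ) K, k^2 = K * (K+1) * (2*K+1) := by
  refine Int.le_induction ?_ ?_
  · simp
  · intro K hK ih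
    have : Icc (1:ℤ) (K+1) = insert (K+1) (Icc 1 K) := by
      ext x; simp only [mem_Icc, mem_insert]; omega
    rw [this, Finset.sum_insert (by simp)]
    ring_nf; ring_nf at ih; nlinarith [ih]

private lemma sum_Icc_split (f : ℤ → ℤ) (a b c : ℤ) (h1 : a ≤ b + 1) (h2 : b ≤ c) :
    ∑ m ∈ Icc a c, f m = ∑ m ∈ Icc a b, f m + ∑ m ∈ Icc (b+1) c, f m := by
  have : Icc a c = Icc a b ∪ Icc (b+1) c := by
    ext x; simp only [mem_Icc, mem_union]; omega
  rw [this, Finset.sum_union]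
  rw [Finset.disjoint_left]
  intro x hx hx'
  simp only [mem_Icc] at hx hx'
  omega

private lemma keyhelper (p y K n' : ℤ) (hpp : Prime p) (hp4 : p = 4*n' - 1)
    (h19 : 19 ≤ p) (hy : y * p = K) (h0 : 0 < K)
    (hK : K = 9 ∨ K = 25 ∨ K = 49 ∨ K = 65 ∨ K = 81) : False := by
  have hK81 : K ≤ 81 := by omega
  have hy1 : 1 ≤ y := by
    rcases le_or_gt y 0 with h | h
    · nlinarith
    · omega
  have hy4 : y ≤ 4 := by nlinarith
  have hple : p ≤ 81 := by nlinarith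
  interval_cases p <;> first
    | omega
    | (norm_num at hpp)



private lemma sum_Icc_split' (f : ℤ → ℤ) (a b c : ℤ) (h1 : a ≤ b + 1) (h2 : b ≤ c) :
    ∑ m ∈ Icc a c, f m = ∑ m ∈ Icc a b, f m + ∑ m ∈ Icc (b+1) c, f m := by
  have : Icc a c = Icc a b ∪ Icc (b+1) c := by
    ext x; simp only [mem_Icc, mem_union]; omega
  rw [this, Finset.sum_union]
  rw [Finset.disjoint_left]
  intro x hx hx'
  simp only [mem_Icc] at hx hx'
  omega

private lemma sum_id' : ∀ K : ℤ, 0 ≤ K →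
    2 * ∑ m ∈ Icc (0:ℤ) (K-1), m = K * (K-1) := by
  refine Int.le_induction ?_ ?_
  · simp
  · intro K hK ih
    have : Icc (0:ℤ) (K+1-1) = insert K (Icc 0 (K-1)) := by
      ext x; simp only [mem_Icc, mem_insert]; omega
    rw [this, Finset.sum_insert (by simp)]
    ring_nf; ring_nf at ih; omega

section
variable (n p : ℤ) (hn : 2 ≤ n) (hp : p = 4*n-1) (hpp : Prime p)
    (σ κ : ℤ → ℤ)
    (hσ : ∀ m, 0 ≤ m → 0 ≤ σ m ∧ (σ m)^2 ≤ m*p ∧ m*p < (σ m + 1)^2)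
    (hκ : ∀ m, 0 ≤ m → 1 ≤ κ m ∧ κ m * (κ m - 1) ≤ m*p + 3*n - 2 ∧
        m*p + 3*n - 1 ≤ κ m * (κ m + 1))

include hn hp hpp hσ hκ in
private lemma count_main (c : ℤ) (hc0 : 0 ≤ c) (hc1 : c ≤ n-1) :
    2 * ∑ t ∈ Icc (c+1) (n-1), (2*n-1-σ t) =
      (n-c)*(n-c-1) + 2 * ∑ m ∈ Icc (0:ℤ) (n-2), max 0 (m+n-c-κ m) := by
  have hp0 : 0 < p := by omega
  have hiff : ∀ t, 1 ≤ t → t ≤ n-1 → ∀ k, 1 ≤ k → k ≤ 2*n-1 →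
      (t*p ≤ k^2 ↔ σ t + 1 ≤ k) := by
    intro t ht1 ht2 k hk1 hk2
    obtain ⟨hs0, hs1, hs2⟩ := hσ t (by omega)
    constructor
    · intro h
      by_contra hcon
      push_neg at hcon
      have hk2' : k^2 ≤ (σ t)^2 := by nlinarith
      have heq : k^2 = t*p := by nlinarith
      have hdvd : p ∣ k^2 := ⟨t, by linarith [heq]⟩
      have hdk : p ∣ k := hpp.dvd_of_dvd_pow hdvd
      have := Int.le_of_dvd (by omega) hdk
      omega
    · intro h
      nlinarith
  have hfib : ∀ t ∈ Icc (c+1) (n-1),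
      ((Icc (1:ℤ) (2*n-1)).filter (fun k => t*p ≤ k^2)) = Icc (σ t + 1) (2*n-1) := by
    intro t ht
    simp only [mem_Icc] at ht
    ext k
    simp only [mem_filter, mem_Icc]
    constructor
    · rintro ⟨⟨h1, h2⟩, h3⟩
      exact ⟨(hiff t (by omega) (by omega) k h1 h2).mp h3, h2⟩
    · rintro ⟨h1, h2⟩
      obtain ⟨hs0, hs1, hs2⟩ := hσ t (by omega)
      have hk1 : 1 ≤ k := by omega
      exact ⟨⟨hk1, h2⟩, (hiff t (by omega) (by omega) k hk1 h2).mpr h1⟩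
  have hσle : ∀ t, 1 ≤ t → t ≤ n-1 → σ t ≤ 2*n-2 := by
    intro t ht1 ht2
    obtain ⟨hs0, hs1, hs2⟩ := hσ t (by omega)
    by_contra hcon
    push_neg at hcon
    nlinarith
  set S1 : Finset ((_ : ℤ) × ℤ) :=
    (Icc (c+1) (n-1)).sigma (fun t => (Icc (1:ℤ) (2*n-1)).filter (fun k => t*p ≤ k^2))
    with hS1
  have hNA : (S1.card : ℤ) = ∑ t ∈ Icc (c+1) (n-1), (2*n-1-σ t) := by
    rw [hS1, Finset.card_sigma]
    push_cast
    refine Finset.sum_congr rfl ?_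
    intro t ht
    rw [hfib t ht, Int.card_Icc]
    simp only [mem_Icc] at ht
    have := hσle t (by omega) (by omega)
    rw [Int.toNat_of_nonneg (by omega)]
    push_cast
    ring
  set S2 : Finset ((_ : ℤ) × ℤ) :=
    (Icc (1-n+c) (2*n-3)).sigma (fun m => (Icc (1:ℤ) (2*n-1)).filter
      (fun j => m+2 ≤ j ∧ j ≤ m+n-c ∧ m*p+3*n-1 ≤ j*(j-1))) with hS2
  have hbij : S1.card = S2.card := by
    rw [hS1, hS2]
    apply Finset.card_nbij' (i := fun q => ⟨q.1+n-1-q.2, 2*n-q.2⟩)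
      (j := fun q => ⟨q.1-q.2+n+1, 2*n-q.2⟩)
    · rintro ⟨t, k⟩ hq
      simp only [mem_sigma, mem_filter, mem_Icc, Finset.mem_coe] at hq ⊢
      obtain ⟨⟨ht1, ht2⟩, ⟨hk1, hk2⟩, hq⟩ := hq
      have key : (t+n-1-k)*p + 3*n - 1 + k^2 = (2*n-k)*(2*n-k-1) + t*p := by
        subst hp; ring
      refine ⟨⟨?_, ?_⟩, ⟨?_, ?_⟩, ?_, ?_, ?_⟩
      · omega
      · omega
      · omega
      · omega
      · omega
      · omega
      · linarith
    · rintro ⟨m, j⟩ hq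
      simp only [mem_sigma, mem_filter, mem_Icc, Finset.mem_coe] at hq ⊢
      obtain ⟨⟨hm1, hm2⟩, ⟨hj1, hj2⟩, hc2, hc3, hq⟩ := hq
      have key : m*p + 3*n - 1 + (2*n-j)^2 = j*(j-1) + (m-j+n+1)*p := by
        subst hp; ring
      refine ⟨⟨?_, ?_⟩, ⟨?_, ?_⟩, ?_⟩
      · omega
      · omega
      · omega
      · omega
      · linarith
    · rintro ⟨t, k⟩ hq
      simp only [mem_sigma, mem_filter, mem_Icc, Finset.mem_coe] at hq
      simp only [Sigma.ext_iff, heq_eq_eq]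
      omega
    · rintro ⟨m, j⟩ hq
      simp only [mem_sigma, mem_filter, mem_Icc, Finset.mem_coe] at hq
      simp only [Sigma.ext_iff, heq_eq_eq]
      omega
  have hκge : ∀ m, 0 ≤ m → m ≤ n-2 → m + 1 ≤ κ m := by
    intro m hm0 hm1
    obtain ⟨h1, h2, h3⟩ := hκ m hm0
    by_contra hcon
    push_neg at hcon
    have h4 : κ m * (κ m + 1) ≤ m * (m+1) := by nlinarith
    nlinarith [mul_nonneg hm0 (by omega : (0:ℤ) ≤ 4*n-2-(m+1))]
  have hquadiff : ∀ m, 0 ≤ m → ∀ j, 1 ≤ j → (m*p+3*n-1 ≤ j*(j-1) ↔ κ m + 1 ≤ j) := by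
    intro m hm0 j hj1
    obtain ⟨h1, h2, h3⟩ := hκ m hm0
    constructor
    · intro h
      by_contra hcon
      push_neg at hcon
      have : j*(j-1) ≤ κ m * (κ m - 1) := by nlinarith
      omega
    · intro h
      nlinarith
  have hfib2 : ∀ m ∈ Icc (0:ℤ) (n-2),
      ((Icc (1:ℤ) (2*n-1)).filter (fun j => m+2 ≤ j ∧ j ≤ m+n-c ∧ m*p+3*n-1 ≤ j*(j-1)))
        = Icc (κ m + 1) (m+n-c) := by
    intro m hm
    simp only [mem_Icc] at hm
    obtain ⟨hm0, hm1⟩ := hm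
    have hge := hκge m hm0 hm1
    ext j
    simp only [mem_filter, mem_Icc]
    constructor
    · rintro ⟨⟨h1, h2⟩, h3, h4, h5⟩
      exact ⟨(hquadiff m hm0 j h1).mp h5, h4⟩
    · rintro ⟨h1, h2⟩
      have hj1 : 1 ≤ j := by omega
      exact ⟨⟨hj1, by omega⟩, by omega, h2, (hquadiff m hm0 j hj1).mpr h1⟩
  have hfibneg : ∀ m ∈ Icc (1-n+c) (-1),
      ((Icc (1:ℤ) (2*n-1)).filter (fun j => m+2 ≤ j ∧ j ≤ m+n-c ∧ m*p+3*n-1 ≤ j*(j-1)))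
        = Icc 1 (m+n-c) := by
    intro m hm
    simp only [mem_Icc] at hm
    obtain ⟨hm0, hm1⟩ := hm
    ext j
    simp only [mem_filter, mem_Icc]
    constructor
    · rintro ⟨⟨h1, h2⟩, h3, h4, h5⟩
      exact ⟨h1, h4⟩
    · rintro ⟨h1, h2⟩
      have hmp : m*p ≤ -p := by nlinarith
      have hjj : 0 ≤ j*(j-1) := by nlinarith
      exact ⟨⟨h1, by omega⟩, by omega, h2, by omega⟩
  have hfibtop : ∀ m ∈ Icc (n-1) (2*n-3),
      ((Icc (1:ℤ) (2*n-1)).filter (fun j => m+2 ≤ j ∧ j ≤ m+n-c ∧ m*p+3*n-1 ≤ j*(j-1)))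
        = (∅ : Finset ℤ) := by
    intro m hm
    simp only [mem_Icc] at hm
    obtain ⟨hm0, hm1⟩ := hm
    ext j
    simp only [mem_filter, mem_Icc, Finset.notMem_empty, iff_false]
    rintro ⟨⟨h1, h2⟩, h3, h4, h5⟩
    have hmp : (n-1)*p ≤ m*p := by nlinarith
    have hjj : j*(j-1) ≤ (2*n-1)*(2*n-2) := by nlinarith
    nlinarith
  have hNB : (S2.card : ℤ) = ∑ m ∈ Icc (1-n+c) (-1), (m+n-c)
      + ∑ m ∈ Icc (0:ℤ) (n-2), max 0 (m+n-c-κ m) := by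
    rw [hS2, Finset.card_sigma]
    push_cast
    rw [sum_Icc_split' (fun m => (((Icc (1:ℤ) (2*n-1)).filter
        (fun j => m+2 ≤ j ∧ j ≤ m+n-c ∧ m*p+3*n-1 ≤ j*(j-1))).card : ℤ))
      (1-n+c) (-1) (2*n-3) (by omega) (by omega)]
    rw [show (-1 : ℤ) + 1 = 0 by ring]
    rw [sum_Icc_split' (fun m => (((Icc (1:ℤ) (2*n-1)).filter
        (fun j => m+2 ≤ j ∧ j ≤ m+n-c ∧ m*p+3*n-1 ≤ j*(j-1))).card : ℤ))
      0 (n-2) (2*n-3) (by omega) (by omega)]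
    have e1 : ∑ m ∈ Icc (1-n+c) (-1), (((Icc (1:ℤ) (2*n-1)).filter
        (fun j => m+2 ≤ j ∧ j ≤ m+n-c ∧ m*p+3*n-1 ≤ j*(j-1))).card : ℤ)
        = ∑ m ∈ Icc (1-n+c) (-1), (m+n-c) := by
      refine Finset.sum_congr rfl ?_
      intro m hm
      rw [hfibneg m hm, Int.card_Icc]
      simp only [mem_Icc] at hm
      omega
    have e2 : ∑ m ∈ Icc (0:ℤ) (n-2), (((Icc (1:ℤ) (2*n-1)).filter
        (fun j => m+2 ≤ j ∧ j ≤ m+n-c ∧ m*p+3*n-1 ≤ j*(j-1))).card : ℤ)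
        = ∑ m ∈ Icc (0:ℤ) (n-2), max 0 (m+n-c-κ m) := by
      refine Finset.sum_congr rfl ?_
      intro m hm
      rw [hfib2 m hm, Int.card_Icc]
      simp only [mem_Icc] at hm
      omega
    have e3 : ∑ m ∈ Icc (n-2+1) (2*n-3), (((Icc (1:ℤ) (2*n-1)).filter
        (fun j => m+2 ≤ j ∧ j ≤ m+n-c ∧ m*p+3*n-1 ≤ j*(j-1))).card : ℤ) = 0 := by
      refine Finset.sum_eq_zero ?_
      intro m hm
      rw [show n-2+1 = n-1 by ring] at hm
      rw [hfibtop m hm]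
      simp
    rw [e1, e2, e3]
    ring
  have htri : 2 * ∑ m ∈ Icc (1-n+c) (-1), (m+n-c) = (n-c)*(n-c-1) := by
    have hre : ∑ m ∈ Icc (1-n+c) (-1), (m+n-c) = ∑ i ∈ Icc (1:ℤ) (n-c-1), i := by
      refine Finset.sum_nbij' (fun m => m+n-c) (fun i => i-n+c) ?_ ?_ ?_ ?_ ?_ <;>
        intro a ha <;> simp only [mem_Icc] at * <;> first | rfl | omega
    rw [hre]
    have h0 : ∑ m ∈ Icc (0:ℤ) (n-c-1), m = ∑ i ∈ Icc (1:ℤ) (n-c-1), i := by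
      rw [sum_Icc_split' (fun m => m) 0 0 (n-c-1) (by omega) (by omega)]
      simp
    rw [← h0]
    exact sum_id' (n-c) (by omega)
  have heq2 := hNA
  rw [hbij, hNB] at heq2
  linarith [heq2, htri]

end

set_option maxHeartbeats 1000000 in
/-- Theorem 9 (main result): for `p = 4n-1` prime with `n > 1`,
`(1/2)∑_{k=1}^{p-1} r_p(k²) = -p∑_{m=0}^{M-1}(2m+1)(⌊R_{m+1}⌋-⌊Q_m⌋)
  - 2p∑_{m=0}^{M-1} m(⌊Q_m⌋-⌊R_m⌋) + (4n³+3n²-n)/6 - Mp(2n-1-2⌊Q_{M-1}⌋)`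
(for `M = 0` the sums are empty and the final term vanishes). -/
theorem stmt_16 (n : ℤ) (hn : 1 < n) (p : ℤ) (hp : p = 4 * n - 1) (hpp : Prime p)
    (M : ℤ) (hM : M = n ^ 2 / p)
    (Q R : ℤ → ℝ)
    (hQ : ∀ m, Q m = 1 / 2 + Real.sqrt (4 * (m : ℝ) * (p : ℝ) + 3 * (p : ℝ) - 4) / 2)
    (hR : ∀ m, R m = Real.sqrt ((m : ℝ) * (p : ℝ))) :
    (1 / 2 : ℝ) * ∑ k ∈ Finset.Icc (1 : ℤ) (p - 1), ((k ^ 2 % p : ℤ) : ℝ) =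
      -(p : ℝ) * ∑ m ∈ Finset.Icc (0 : ℤ) (M - 1),
          (2 * (m : ℝ) + 1) * ((⌊R (m + 1)⌋ : ℝ) - (⌊Q m⌋ : ℝ))
      - 2 * (p : ℝ) * ∑ m ∈ Finset.Icc (0 : ℤ) (M - 1),
          (m : ℝ) * ((⌊Q m⌋ : ℝ) - (⌊R m⌋ : ℝ))
      + (4 * (n : ℝ) ^ 3 + 3 * (n : ℝ) ^ 2 - (n : ℝ)) / 6
      - (M : ℝ) * (p : ℝ) * (2 * (n : ℝ) - 1 - 2 * (⌊Q (M - 1)⌋ : ℝ)) := by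
  have hn2 : 2 ≤ n := hn
  have hp0 : 0 < p := by omega
  set σ : ℤ → ℤ := fun m => ⌊R m⌋ with hσdef
  set κ : ℤ → ℤ := fun m => ⌊Q m⌋ with hκdef
  -- facts about σ
  have hσ : ∀ m, 0 ≤ m → 0 ≤ σ m ∧ (σ m)^2 ≤ m*p ∧ m*p < (σ m + 1)^2 := by
    intro m hm
    have hmp : (0:ℝ) ≤ (m:ℝ) * (p:ℝ) := by
      have h1 : (0:ℝ) ≤ (m:ℝ) := by exact_mod_cast hm
      have h2 : (0:ℝ) ≤ (p:ℝ) := by exact_mod_cast le_of_lt hp0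
      exact mul_nonneg h1 h2
    have hRm : R m = Real.sqrt ((m:ℝ)*(p:ℝ)) := hR m
    have hx0 : 0 ≤ R m := by rw [hRm]; exact Real.sqrt_nonneg _
    have hsq : (R m)^2 = (m:ℝ)*(p:ℝ) := by rw [hRm]; exact Real.sq_sqrt hmp
    have h0 : 0 ≤ σ m := Int.floor_nonneg.mpr hx0
    have h1 : ((σ m : ℤ):ℝ) ≤ R m := Int.floor_le _
    have h2 : R m < ((σ m : ℤ):ℝ) + 1 := Int.lt_floor_add_one _
    have h0' : (0:ℝ) ≤ ((σ m : ℤ):ℝ) := by exact_mod_cast h0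
    refine ⟨h0, ?_, ?_⟩
    · have : ((σ m : ℤ):ℝ)^2 ≤ (m:ℝ)*(p:ℝ) := by nlinarith
      exact_mod_cast this
    · have : (m:ℝ)*(p:ℝ) < (((σ m : ℤ):ℝ) + 1)^2 := by nlinarith
      exact_mod_cast this
  -- facts about κ
  have hκ : ∀ m, 0 ≤ m → 1 ≤ κ m ∧ κ m * (κ m - 1) ≤ m*p + 3*n - 2 ∧
      m*p + 3*n - 1 ≤ κ m * (κ m + 1) := by
    intro m hm
    have hDint : (1:ℤ) ≤ 4*(m*p) + 3*p - 4 := by nlinarith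
    have hDr : (4*(m:ℝ)*(p:ℝ) + 3*(p:ℝ) - 4) = ((4*(m*p) + 3*p - 4 : ℤ) : ℝ) := by
      push_cast; ring
    have hD0 : (0:ℝ) ≤ 4*(m:ℝ)*(p:ℝ) + 3*(p:ℝ) - 4 := by
      rw [hDr]; exact_mod_cast (by omega : (0:ℤ) ≤ 4*(m*p) + 3*p - 4)
    have hD1 : (1:ℝ) ≤ 4*(m:ℝ)*(p:ℝ) + 3*(p:ℝ) - 4 := by
      rw [hDr]; exact_mod_cast hDint
    have hQm : Q m = 1/2 + Real.sqrt (4*(m:ℝ)*(p:ℝ) + 3*(p:ℝ) - 4) / 2 := hQ m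
    set x : ℝ := Real.sqrt (4*(m:ℝ)*(p:ℝ) + 3*(p:ℝ) - 4) with hxdef
    have hx0 : 0 ≤ x := Real.sqrt_nonneg _
    have hx1 : 1 ≤ x := by
      have := Real.sqrt_le_sqrt hD1
      rwa [Real.sqrt_one] at this
    have hxsq : x^2 = 4*(m:ℝ)*(p:ℝ) + 3*(p:ℝ) - 4 := Real.sq_sqrt hD0
    have hc1 : 1 ≤ κ m := by
      rw [hκdef]
      refine Int.le_floor.mpr ?_
      rw [hQm]; push_cast; linarith
    have h1 : ((κ m : ℤ):ℝ) ≤ 1/2 + x/2 := by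
      rw [hκdef]; simpa [hQm] using (Int.floor_le (Q m))
    have h2 : 1/2 + x/2 < ((κ m : ℤ):ℝ) + 1 := by
      rw [hκdef]; simpa [hQm] using (Int.lt_floor_add_one (Q m))
    have hc1' : (1:ℝ) ≤ ((κ m : ℤ):ℝ) := by exact_mod_cast hc1
    have hup : (2*(κ m : ℤ) - 1 : ℤ)^2 ≤ 4*(m*p) + 3*p - 4 := by
      have : ((2*(κ m : ℤ) - 1 : ℤ):ℝ)^2 ≤ 4*(m:ℝ)*(p:ℝ) + 3*(p:ℝ) - 4 := by
        push_cast; nlinarith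
      rw [hDr] at this
      exact_mod_cast this
    have hdn : 4*(m*p) + 3*p - 4 < (2*(κ m : ℤ) + 1 : ℤ)^2 := by
      have : 4*(m:ℝ)*(p:ℝ) + 3*(p:ℝ) - 4 < ((2*(κ m : ℤ) + 1 : ℤ):ℝ)^2 := by
        push_cast; nlinarith
      rw [hDr] at this
      exact_mod_cast this
    have e1 : (2*(κ m) - 1)^2 = 4*(κ m * (κ m - 1)) + 1 := by ring
    have e2 : (2*(κ m) + 1)^2 = 4*(κ m * (κ m + 1)) + 1 := by ring
    rw [e1] at hup
    rw [e2] at hdn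
    exact ⟨hc1, by omega, by omega⟩
  -- facts about M
  have hpnd : ¬ (p ∣ n^2) := by
    intro h
    have hdn : p ∣ n := hpp.dvd_of_dvd_pow h
    have := Int.le_of_dvd (by omega) hdn
    omega
  have hM0 : 0 ≤ M := by
    rw [hM]
    exact Int.ediv_nonneg (by positivity) (le_of_lt hp0)
  have hMp1 : M * p ≤ n^2 - 1 := by
    have h1 : M * p ≤ n^2 := by
      rw [hM]; exact Int.ediv_mul_le _ (by omega)
    rcases lt_or_eq_of_le h1 with h | h
    · omega
    · exact absurd ⟨M, by linarith [h]⟩ hpnd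
  have hMp2 : n^2 < (M+1) * p := by
    rw [hM]
    exact Int.lt_ediv_add_one_mul_self _ hp0
  have hM1 : M ≤ n - 1 := by nlinarith
  -- X names
  set X1 : ℤ := ∑ m ∈ Finset.Icc (1:ℤ) M, σ m with hX1
  set X2 : ℤ := ∑ m ∈ Finset.Icc (0:ℤ) (M-1), κ m with hX2
  set S : ℤ := ∑ k ∈ Finset.Icc (1:ℤ) (2*n-1), (k^2 / p) with hS
  -- counting facts (copy of count_main internals for c = 0 style use)
  have hiff : ∀ t, 1 ≤ t → t ≤ n-1 → ∀ k, 1 ≤ k → k ≤ 2*n-1 →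
      (t*p ≤ k^2 ↔ σ t + 1 ≤ k) := by
    intro t ht1 ht2 k hk1 hk2
    obtain ⟨hs0, hs1, hs2⟩ := hσ t (by omega)
    constructor
    · intro h
      by_contra hcon
      push_neg at hcon
      have hk2' : k^2 ≤ (σ t)^2 := by nlinarith
      have heq : k^2 = t*p := by nlinarith
      have hdvd : p ∣ k^2 := ⟨t, by linarith [heq]⟩
      have hdk : p ∣ k := hpp.dvd_of_dvd_pow hdvd
      have := Int.le_of_dvd (by omega) hdk
      omega
    · intro h
      nlinarith
  have hfib1 : ∀ t ∈ Finset.Icc (1:ℤ) (n-1),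
      ((Finset.Icc (1:ℤ) (2*n-1)).filter (fun k => t*p ≤ k^2)) = Finset.Icc (σ t + 1) (2*n-1) := by
    intro t ht
    simp only [Finset.mem_Icc] at ht
    ext k
    simp only [Finset.mem_filter, Finset.mem_Icc]
    constructor
    · rintro ⟨⟨h1, h2⟩, h3⟩
      exact ⟨(hiff t (by omega) (by omega) k h1 h2).mp h3, h2⟩
    · rintro ⟨h1, h2⟩
      obtain ⟨hs0, hs1, hs2⟩ := hσ t (by omega)
      have hk1 : 1 ≤ k := by omega
      exact ⟨⟨hk1, h2⟩, (hiff t (by omega) (by omega) k hk1 h2).mpr h1⟩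
  have hσle : ∀ t, 1 ≤ t → t ≤ n-1 → σ t ≤ 2*n-2 := by
    intro t ht1 ht2
    obtain ⟨hs0, hs1, hs2⟩ := hσ t (by omega)
    by_contra hcon
    push_neg at hcon
    nlinarith
  have hfibk : ∀ k ∈ Finset.Icc (1:ℤ) (2*n-1),
      ((Finset.Icc (1:ℤ) (n-1)).filter (fun t => t*p ≤ k^2)) = Finset.Icc 1 (k^2/p) := by
    intro k hk
    simp only [Finset.mem_Icc] at hk
    have hkd : k^2/p ≤ n-1 := by
      have h2 : k^2 < n*p := by nlinarith
      have := (Int.ediv_lt_iff_lt_mul hp0).mpr h2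
      omega
    ext t
    simp only [Finset.mem_filter, Finset.mem_Icc]
    constructor
    · rintro ⟨⟨h1, h2⟩, h3⟩
      exact ⟨h1, (Int.le_ediv_iff_mul_le hp0).mpr h3⟩
    · rintro ⟨h1, h2⟩
      exact ⟨⟨h1, by omega⟩, (Int.le_ediv_iff_mul_le hp0).mp h2⟩
  have hScount : S = ∑ t ∈ Finset.Icc (1:ℤ) (n-1), (2*n-1 - σ t) := by
    set T1 : Finset ((_:ℤ)×ℤ) := (Finset.Icc (1:ℤ) (2*n-1)).sigma
      (fun k => (Finset.Icc (1:ℤ) (n-1)).filter (fun t => t*p ≤ k^2)) with hT1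
    set T2 : Finset ((_:ℤ)×ℤ) := (Finset.Icc (1:ℤ) (n-1)).sigma
      (fun t => (Finset.Icc (1:ℤ) (2*n-1)).filter (fun k => t*p ≤ k^2)) with hT2
    have h1 : (T1.card : ℤ) = S := by
      rw [hT1, Finset.card_sigma, hS]
      push_cast
      refine Finset.sum_congr rfl ?_
      intro k hk
      rw [hfibk k hk, Int.card_Icc,
        show k^2/p + 1 - 1 = k^2/p from by ring,
        Int.toNat_of_nonneg (Int.ediv_nonneg (sq_nonneg k) (le_of_lt hp0))]
    have h2 : (T2.card : ℤ) = ∑ t ∈ Finset.Icc (1:ℤ) (n-1), (2*n-1-σ t) := by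
      rw [hT2, Finset.card_sigma]
      push_cast
      refine Finset.sum_congr rfl ?_
      intro t ht
      rw [hfib1 t ht, Int.card_Icc]
      simp only [Finset.mem_Icc] at ht
      have := hσle t (by omega) (by omega)
      omega
    have hb : T1.card = T2.card := by
      rw [hT1, hT2]
      apply Finset.card_nbij' (i := fun q => ⟨q.2, q.1⟩) (j := fun q => ⟨q.2, q.1⟩)
      · rintro ⟨k, t⟩ hq
        simp only [Finset.mem_sigma, Finset.mem_filter, Finset.mem_Icc, Finset.mem_coe] at hq ⊢
        tauto
      · rintro ⟨t, k⟩ hq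
        simp only [Finset.mem_sigma, Finset.mem_filter, Finset.mem_Icc, Finset.mem_coe] at hq ⊢
        tauto
      · rintro ⟨k, t⟩ _; rfl
      · rintro ⟨t, k⟩ _; rfl
    rw [← h1, hb, h2]
  -- pairing
  have hv : ∀ k : ℤ, (p-k)^2 % p = k^2 % p := by
    intro k
    have e : (p-k)^2 = k^2 + (p - 2*k)*p := by ring
    rw [e, Int.add_mul_emod_self_right]
  have hpair : ∑ k ∈ Finset.Icc (1:ℤ) (p-1), (k^2 % p)
      = 2 * ∑ k ∈ Finset.Icc (1:ℤ) (2*n-1), (k^2 % p) := by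
    rw [sum_Icc_split' (fun k => k^2 % p) 1 (2*n-1) (p-1) (by omega) (by omega)]
    have hrefl : ∑ k ∈ Finset.Icc (2*n-1+1) (p-1), (k^2 % p)
        = ∑ k ∈ Finset.Icc (1:ℤ) (2*n-1), (k^2 % p) := by
      refine Finset.sum_nbij' (fun k => p - k) (fun k => p - k) ?_ ?_ ?_ ?_ ?_
      · intro a ha; simp only [Finset.mem_Icc] at *; omega
      · intro a ha; simp only [Finset.mem_Icc] at *; omega
      · intro a ha; show p - (p - a) = a; omega
      · intro a ha; show p - (p - a) = a; omega
      · intro a ha; exact (hv a).symm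
    rw [hrefl]
    ring
  have h1 : 3 * (∑ k ∈ Finset.Icc (1:ℤ) (p-1), (k^2 % p))
      = 2*n*(2*n-1)*(4*n-1) - 6*p*S := by
    have hmodsum : ∑ k ∈ Finset.Icc (1:ℤ) (2*n-1), (k^2 % p)
        = (∑ k ∈ Finset.Icc (1:ℤ) (2*n-1), k^2) - p * S := by
      rw [hS, Finset.mul_sum, ← Finset.sum_sub_distrib]
      refine Finset.sum_congr rfl ?_
      intro k _
      exact Int.emod_def _ _
    have hsq6 := sum_sq (2*n-1) (by omega)
    rw [hpair, hmodsum]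
    linear_combination hsq6
  -- lemma (b)
  have hbk : ∀ m, 0 ≤ m → m ≤ M-1 → κ m ≤ m+n-M := by
    intro m hm0 hm1
    obtain ⟨h1, h2, h3⟩ := hκ m hm0
    by_contra hcon
    push_neg at hcon
    have ha0 : 1 ≤ m+n-M := by omega
    have hmono : (m+n-M+1)*(m+n-M) ≤ κ m * (κ m - 1) := by nlinarith
    nlinarith [hMp1, mul_nonneg (by omega : (0:ℤ) ≤ M-1-m) (by omega : (0:ℤ) ≤ n),
      sq_nonneg (M-1-m)]
  -- lemma (c)
  have hck : ∀ m, M ≤ m → m ≤ n-2 → m+n-M ≤ κ m := by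
    intro m hm0 hm1
    obtain ⟨h1, h2, h3⟩ := hκ m (by omega)
    by_contra hcon
    push_neg at hcon
    have ha0 : 2 ≤ m+n-M := by omega
    have hmono : κ m * (κ m + 1) ≤ (m+n-M-1)*(m+n-M) := by nlinarith
    nlinarith [hMp2, mul_nonneg (by omega : (0:ℤ) ≤ m-M) (by omega : (0:ℤ) ≤ 2*n-(m-M))]
  -- the key identity κ (M-1) = σ M, multiplied by M
  have h5 : M * κ (M-1) = M * σ M := by
    rcases eq_or_lt_of_le hM0 with hM0' | hMpos
    · rw [← hM0']; ring
    · have hM1' : 1 ≤ M := hMpos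
      have hMpp : p ≤ M*p := by nlinarith
      have hn4 : 4 ≤ n := by
        by_contra hcc
        push_neg at hcc
        interval_cases n <;> omega
      have hn5 : 5 ≤ n := by
        rcases eq_or_lt_of_le hn4 with h4 | h5
        · exfalso
          rw [← h4] at hp
          norm_num at hp
          rw [hp] at hpp
          norm_num at hpp
        · omega
      have h19 : 19 ≤ p := by omega
      obtain ⟨ht0, ht1, ht2⟩ := hσ M (by omega)
      obtain ⟨hk1, hk2, hk3⟩ := hκ (M-1) (by omega)
      have htn : σ M ≤ n-1 := by nlinarith
      have ht1' : 1 ≤ σ M := by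
        by_contra hcc
        push_neg at hcc
        have : σ M = 0 := by omega
        rw [this] at ht2
        nlinarith
      have heasy : (M-1)*p + 3*n - 1 ≤ σ M * (σ M + 1) := by nlinarith
      have hhard : σ M * (σ M - 1) ≤ (M-1)*p + 3*n - 2 := by
        by_contra hcon
        push_neg at hcon
        have hβt : M*p - (σ M)^2 + σ M ≤ n := by nlinarith
        have ht3 : 3 ≤ σ M := by
          by_contra hcc
          push_neg at hcc
          nlinarith
        have hkey : (4*n+1-16*M)*p = 16*(n^2 - M*p) - 1 := by rw [hp]; ring
        rcases le_or_gt (σ M) (n-3) with hts | htl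
        · nlinarith [hMp2, mul_nonneg (by omega : (0:ℤ) ≤ σ M - 3)
            (by omega : (0:ℤ) ≤ n - 3 - σ M), ht1]
        · rcases (by omega : σ M = n - 2 ∨ σ M = n - 1) with hte | hte
          · have hβ0 : 0 ≤ M*p - (σ M)^2 := by nlinarith
            have hβ2 : M*p - (σ M)^2 ≤ 2 := by omega
            have hKeq : (16 - (4*n+1-16*M))*p = 49 + 16*(M*p - (σ M)^2) := by
              have e : (σ M)^2 = (n-2)^2 := by rw [hte]
              have e2 : (16 - (4*n+1-16*M))*p = 16*p - (4*n+1-16*M)*p := by ring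
              rw [e2, hkey, e, hp]; ring
            exact absurd hKeq (fun h => keyhelper p _ _ n hpp hp h19 h (by omega) (by omega))
          · have hβ0 : 0 ≤ M*p - (σ M)^2 := by nlinarith
            have hβ1 : M*p - (σ M)^2 ≤ 1 := by omega
            have hKeq : (8 - (4*n+1-16*M))*p = 9 + 16*(M*p - (σ M)^2) := by
              have e : (σ M)^2 = (n-1)^2 := by rw [hte]
              have e2 : (8 - (4*n+1-16*M))*p = 8*p - (4*n+1-16*M)*p := by ring
              rw [e2, hkey, e, hp]; ring
            exact absurd hKeq (fun h => keyhelper p _ _ n hpp hp h19 h (by omega) (by omega))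
      have hkt : κ (M-1) = σ M := by
        by_contra hne
        rcases lt_or_gt_of_ne hne with hlt | hgt
        · nlinarith
        · nlinarith
      rw [hkt]
  -- count_main at c = M
  have hCM := count_main n p hn2 hp hpp σ κ hσ hκ M hM0 hM1
  -- evaluate the max-sum
  have hmaxsum : ∑ m ∈ Finset.Icc (0:ℤ) (n-2), max 0 (m+n-M-κ m)
      = ∑ m ∈ Finset.Icc (0:ℤ) (M-1), (m+n-M-κ m) := by
    rw [sum_Icc_split' (fun m => max 0 (m+n-M-κ m)) 0 (M-1) (n-2) (by omega) (by omega)]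
    have e1 : ∑ m ∈ Finset.Icc (0:ℤ) (M-1), max 0 (m+n-M-κ m)
        = ∑ m ∈ Finset.Icc (0:ℤ) (M-1), (m+n-M-κ m) := by
      refine Finset.sum_congr rfl ?_
      intro m hm
      simp only [Finset.mem_Icc] at hm
      have := hbk m hm.1 hm.2
      omega
    have e2 : ∑ m ∈ Finset.Icc (M-1+1) (n-2), max 0 (m+n-M-κ m) = 0 := by
      refine Finset.sum_eq_zero ?_
      intro m hm
      simp only [Finset.mem_Icc] at hm
      have := hck m (by omega) (by omega)
      omega
    rw [e1, e2]
    ring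
  -- split S at M
  have hSsplit : ∑ t ∈ Finset.Icc (1:ℤ) (n-1), (2*n-1-σ t)
      = ∑ t ∈ Finset.Icc (1:ℤ) M, (2*n-1-σ t)
        + ∑ t ∈ Finset.Icc (M+1) (n-1), (2*n-1-σ t) :=
    sum_Icc_split' _ 1 M (n-1) (by omega) (by omega)
  have hfirst : ∑ t ∈ Finset.Icc (1:ℤ) M, (2*n-1-σ t) = M*(2*n-1) - X1 := by
    rw [hX1, Finset.sum_sub_distrib]
    have e : ∑ _t ∈ Finset.Icc (1:ℤ) M, (2*n-1) = M*(2*n-1) := by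
      rw [Finset.sum_const, Int.card_Icc, show M+1-1 = M by ring, nsmul_eq_mul,
        Int.toNat_of_nonneg hM0]
    rw [e]
  have hXsum : 2 * ∑ m ∈ Finset.Icc (0:ℤ) (M-1), (m+n-M-κ m)
      = M*(M-1) + 2*M*(n-M) - 2*X2 := by
    have e : ∑ m ∈ Finset.Icc (0:ℤ) (M-1), (m+n-M-κ m)
        = (∑ m ∈ Finset.Icc (0:ℤ) (M-1), m)
          + (∑ _m ∈ Finset.Icc (0:ℤ) (M-1), (n-M)) - X2 := by
      rw [hX2, ← Finset.sum_add_distrib, ← Finset.sum_sub_distrib]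
      refine Finset.sum_congr rfl ?_
      intro m _
      ring
    rw [e]
    have e1 := sum_id M hM0
    have e2 := sum_const_Icc (n-M) M hM0
    linarith
  have h3 : 2*S - 2*(M*(2*n-1) - X1)
      = (n-M)*(n-M-1) + M*(M-1) + 2*M*(n-M) - 2*X2 := by
    rw [hmaxsum] at hCM
    rw [hScount, hSsplit, hfirst] at *
    linarith [hCM, hXsum]
  -- telescoping for A' + 2B'
  have htele := sum_tele (fun m => 2*m*σ m) M hM0
  have hshift := sum_shift σ M
  have h4 : (∑ m ∈ Finset.Icc (0:ℤ) (M-1), (2*m+1)*(σ (m+1) - κ m))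
      + 2*(∑ m ∈ Finset.Icc (0:ℤ) (M-1), m*(κ m - σ m))
      = 2*M*σ M - X1 - X2 := by
    have e : ∑ m ∈ Finset.Icc (0:ℤ) (M-1), ((2*m+1)*(σ (m+1) - κ m) + 2*(m*(κ m - σ m)))
        = ∑ m ∈ Finset.Icc (0:ℤ) (M-1),
            (((fun m => 2*m*σ m) (m+1) - (fun m => 2*m*σ m) m) - σ (m+1) - κ m) := by
      refine Finset.sum_congr rfl ?_
      intro m _
      simp only
      ring
    have e2 : (∑ m ∈ Finset.Icc (0:ℤ) (M-1), (2*m+1)*(σ (m+1) - κ m))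
        + 2*(∑ m ∈ Finset.Icc (0:ℤ) (M-1), m*(κ m - σ m))
        = ∑ m ∈ Finset.Icc (0:ℤ) (M-1), ((2*m+1)*(σ (m+1) - κ m) + 2*(m*(κ m - σ m))) := by
      rw [Finset.sum_add_distrib, Finset.mul_sum]
    rw [e2, e]
    rw [Finset.sum_sub_distrib, Finset.sum_sub_distrib]
    rw [htele, hshift, ← hX1, ← hX2]
    ring
  -- the integer identity
  have hINT : 3 * (∑ k ∈ Finset.Icc (1:ℤ) (p-1), (k^2 % p))
      = -6*p*(∑ m ∈ Finset.Icc (0:ℤ) (M-1), (2*m+1)*(σ (m+1) - κ m))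
        - 12*p*(∑ m ∈ Finset.Icc (0:ℤ) (M-1), m*(κ m - σ m))
        + (4*n^3+3*n^2-n) - 6*(M*p*(2*n-1-2*κ (M-1))) := by
    linear_combination h1 - 3*p*h3 + 6*p*h4 - 12*p*h5 - 3*(n^2-n)*hp
  -- back to the reals
  have hc1 : ∑ k ∈ Finset.Icc (1:ℤ) (p-1), ((k ^ 2 % p : ℤ) : ℝ)
      = ((∑ k ∈ Finset.Icc (1:ℤ) (p-1), (k^2 % p) : ℤ) : ℝ) := by
    push_cast
    rfl
  have hc2 : ∑ m ∈ Finset.Icc (0 : ℤ) (M - 1),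
        (2 * (m : ℝ) + 1) * ((⌊R (m + 1)⌋ : ℝ) - (⌊Q m⌋ : ℝ))
      = ((∑ m ∈ Finset.Icc (0:ℤ) (M-1), (2*m+1)*(σ (m+1) - κ m) : ℤ) : ℝ) := by
    rw [hσdef, hκdef]
    push_cast
    rfl
  have hc3 : ∑ m ∈ Finset.Icc (0 : ℤ) (M - 1), (m : ℝ) * ((⌊Q m⌋ : ℝ) - (⌊R m⌋ : ℝ))
      = ((∑ m ∈ Finset.Icc (0:ℤ) (M-1), m*(κ m - σ m) : ℤ) : ℝ) := by
    rw [hσdef, hκdef]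
    push_cast
    rfl
  have hc4 : (⌊Q (M-1)⌋ : ℝ) = ((κ (M-1) : ℤ) : ℝ) := by rw [hκdef]
  rw [hc1, hc2, hc3, hc4]
  have hINTR := congrArg (fun z : ℤ => (z : ℝ)) hINT
  push_cast at hINTR
  push_cast
  linarith
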